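/- arXiv:0802.1323 — 3 statements merged into one kernel-verified Lean document; each statement's English description precedes it below -/
import Mathlib

section
/- Bounded Cancellation Lemma (algebraic form): Let F be a finitely generated free group with basis A and let φ be an automorphism of F. Then there exists a constant B, depending only on φ, such that for all u, v ∈ F with |uv| = |u| + |v| (i.e. there is no cancellation in the product uv), one has |φ(u)| + |φ(v)| − |φ(uv)| ≤ 2B; in other words, when the reduced words for φ(u) and φ(v) are concatenated and freely reduced, at most B letters are cancelled from each factor. -/
/-!
Bounded Cancellation Lemma (algebraic form): for an automorphism `φ` of a finitely
generated free group `F`, there is a constant `B` (depending only on `φ`) such that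
whenever there is no cancellation in the product `u * v`, at most `B` letters cancel
from each of `φ u`, `φ v` when the product `φ u * φ v` is freely reduced.
-/

namespace BCL
open FreeGroup List

variable {α : Type*} [DecidableEq α]

def R : (α × Bool) → (α × Bool) → Prop := fun p q => ¬(p.1 = q.1 ∧ p.2 = !q.2)



/-- The no-cancellation relation between adjacent letters, aligned with `reduce`'s test. -/

theorem reduce_eq_self_of_chain : ∀ {L : List (α × Bool)}, List.Chain' R L → FreeGroup.reduce L = L
  | [], _ => rfl
  | [x], _ => rfl
  | x :: y :: T, h => by
    have h2 : R x y := (List.isChain_cons_cons.mp h).1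
    have ih := reduce_eq_self_of_chain (List.isChain_cons_cons.mp h).2
    rw [FreeGroup.reduce.cons, ih]
    exact if_neg h2

theorem chain_of_reduce_eq_self : ∀ {L : List (α × Bool)}, FreeGroup.reduce L = L → List.Chain' R L
  | [], _ => List.isChain_nil
  | [x], _ => List.isChain_singleton x
  | x :: y :: T, h => by
    rw [FreeGroup.reduce.cons] at h
    cases hr : FreeGroup.reduce (y :: T) with
    | nil => rw [hr] at h; exact absurd h (by simp)
    | cons hd tl =>
      rw [hr] at h
      dsimp only at h
      by_cases hc : x.1 = hd.1 ∧ x.2 = !hd.2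
      · rw [if_pos hc] at h
        have hlen := congrArg List.length h
        have := FreeGroup.Red.length_le (FreeGroup.reduce.red (L := y :: T))
        rw [hr] at this
        simp at hlen this; omega
      · rw [if_neg hc] at h
        obtain ⟨h1, h2⟩ : (hd : α × Bool) = y ∧ tl = T := by
          injection h with _ h'; injection h' with h1 h2; exact ⟨h1, h2⟩
        subst h1; subst h2
        exact List.isChain_cons_cons.mpr ⟨hc, chain_of_reduce_eq_self hr⟩

theorem chain_toWord (z : FreeGroup α) : List.Chain' R z.toWord :=
  chain_of_reduce_eq_self (FreeGroup.reduce_toWord z)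

theorem norm_mk_eq {L : List (α × Bool)} (h : List.Chain' R L) : (FreeGroup.mk L).norm = L.length := by
  unfold FreeGroup.norm
  rw [FreeGroup.toWord_mk, reduce_eq_self_of_chain h]





theorem norm_def (z : FreeGroup α) : z.norm = z.toWord.length := rfl

/-- If there is no cancellation, the reduced word of the product is the concatenation. -/
theorem toWord_mul_of_norm {u v : FreeGroup α} (h : (u * v).norm = u.norm + v.norm) :
    (u * v).toWord = u.toWord ++ v.toWord := by
  have hmk : u * v = FreeGroup.mk (u.toWord ++ v.toWord) := by
    rw [← FreeGroup.mul_mk, FreeGroup.mk_toWord, FreeGroup.mk_toWord]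
  have h1 : (u * v).toWord = FreeGroup.reduce (u.toWord ++ v.toWord) := by
    rw [hmk, FreeGroup.toWord_mk]
  have hsub : FreeGroup.reduce (u.toWord ++ v.toWord) <+ u.toWord ++ v.toWord :=
    (FreeGroup.reduce.red).sublist
  have hlen : (FreeGroup.reduce (u.toWord ++ v.toWord)).length = (u.toWord ++ v.toWord).length := by
    rw [← h1]
    rw [List.length_append]; exact h
  rw [h1, hsub.eq_of_length hlen]


/-- If there is cancellation in `u * v`, the last letter of `u` cancels the first of `v`. -/
theorem step_lemma {u v : FreeGroup α} (h : (u * v).norm < u.norm + v.norm) :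
    ∃ (x : α × Bool) (u' v' : FreeGroup α),
      u = u' * FreeGroup.mk [x] ∧ v = (FreeGroup.mk [x])⁻¹ * v' ∧
      u.norm = u'.norm + 1 ∧ v.norm = v'.norm + 1 ∧ u * v = u' * v' := by
  set L₁ := u.toWord with hL₁
  set L₂ := v.toWord with hL₂
  have hnc : ¬ List.Chain' R (L₁ ++ L₂) := by
    intro hc
    have : (u * v).norm = u.norm + v.norm := by
      have hmk : u * v = FreeGroup.mk (L₁ ++ L₂) := by
        rw [← FreeGroup.mul_mk, hL₁, hL₂, FreeGroup.mk_toWord, FreeGroup.mk_toWord]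
      rw [hmk, norm_mk_eq hc, List.length_append]
      rfl
    omega
  rw [show List.Chain' R (L₁ ++ L₂) ↔ List.IsChain R (L₁ ++ L₂) from Iff.rfl, List.isChain_append] at hnc
  push_neg at hnc
  obtain ⟨x, hx, y, hy, hxy⟩ := hnc (chain_toWord u) (chain_toWord v)
  have hxy' : y = (x.1, !x.2) := by
    have h' : x.1 = y.1 ∧ x.2 = !y.2 := not_not.mp hxy
    have : y.2 = !x.2 := by rw [h'.2, Bool.not_not]
    exact Prod.ext h'.1.symm this
  -- decompose L₁ and L₂
  have hL₁ne : L₁ ≠ [] := by intro hnil; rw [hnil] at hx; simp at hx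
  have hxval : x = L₁.getLast hL₁ne := by
    rw [List.getLast?_eq_getLast hL₁ne] at hx; exact (Option.mem_some_iff.mp hx).symm
  have hdecomp₁ : L₁.dropLast ++ [x] = L₁ := by rw [hxval]; exact List.dropLast_concat_getLast hL₁ne
  have hdecomp₂ : y :: L₂.tail = L₂ := List.cons_head?_tail hy
  refine ⟨x, FreeGroup.mk L₁.dropLast, FreeGroup.mk L₂.tail, ?_, ?_, ?_, ?_, ?_⟩
  · rw [FreeGroup.mul_mk, hdecomp₁, hL₁, FreeGroup.mk_toWord]
  · have : (FreeGroup.mk [x])⁻¹ = FreeGroup.mk [y] := by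
      rw [FreeGroup.inv_mk, hxy']; rfl
    rw [this, FreeGroup.mul_mk]
    show v = FreeGroup.mk (y :: L₂.tail)
    rw [hdecomp₂, hL₂, FreeGroup.mk_toWord]
  · have hch : List.Chain' R L₁.dropLast := (chain_toWord u).prefix (List.dropLast_prefix L₁)
    rw [norm_mk_eq hch]
    have : L₁.length = L₁.dropLast.length + 1 := by
      rw [← hdecomp₁]; simp
    rw [norm_def, ← hL₁]; omega
  · have hch : List.Chain' R L₂.tail := (chain_toWord v).suffix (List.tail_suffix L₂)
    rw [norm_mk_eq hch]
    have : L₂.length = L₂.tail.length + 1 := by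
      rw [← hdecomp₂]; simp
    rw [norm_def, ← hL₂]; omega
  · have hu : u = FreeGroup.mk L₁.dropLast * FreeGroup.mk [x] := by
      rw [FreeGroup.mul_mk, hdecomp₁, hL₁, FreeGroup.mk_toWord]
    have hv : v = FreeGroup.mk [(x.1, !x.2)] * FreeGroup.mk L₂.tail := by
      rw [FreeGroup.mul_mk, ← hxy']
      show v = FreeGroup.mk (y :: L₂.tail)
      rw [hdecomp₂, hL₂, FreeGroup.mk_toWord]
    rw [hu, hv]
    have hcancel : FreeGroup.mk [x] * FreeGroup.mk [(x.1, !x.2)] = 1 := by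
      have : FreeGroup.mk [(x.1, !x.2)] = (FreeGroup.mk [x])⁻¹ := by
        rw [FreeGroup.inv_mk]; rfl
      rw [this, mul_inv_cancel]
    rw [mul_assoc, ← mul_assoc (FreeGroup.mk [x]), hcancel, one_mul]

/-- Cancellation structure: any product splits as `u = x s`, `v = s⁻¹ y` with no cancellation. -/
theorem split_aux : ∀ (n : ℕ) (u v : FreeGroup α), u.norm + v.norm ≤ n →
    ∃ x s y : FreeGroup α, u = x * s ∧ v = s⁻¹ * y ∧
      u.norm = x.norm + s.norm ∧ v.norm = s.norm + y.norm ∧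
      (u * v).norm = x.norm + y.norm := by
  intro n
  induction n with
  | zero =>
    intro u v hn
    have hu : u.norm = 0 := by omega
    have hv : v.norm = 0 := by omega
    refine ⟨u, 1, v, by simp, by simp, by simp [FreeGroup.norm_one], by simp [FreeGroup.norm_one], ?_⟩
    rw [FreeGroup.norm_eq_zero.mp hu, FreeGroup.norm_eq_zero.mp hv]
    simp [FreeGroup.norm_one]
  | succ n ih =>
    intro u v hn
    rcases eq_or_lt_of_le (FreeGroup.norm_mul_le u v) with heq | hlt
    · exact ⟨u, 1, v, by simp, by simp, by simp [FreeGroup.norm_one], by simp [FreeGroup.norm_one], heq⟩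
    · obtain ⟨x, u', v', hu, hv, hnu, hnv, huv⟩ := step_lemma hlt
      obtain ⟨x₀, s₀, y₀, hu', hv', hnu', hnv', huv'⟩ := ih u' v' (by omega)
      refine ⟨x₀, s₀ * FreeGroup.mk [x], y₀, ?_, ?_, ?_, ?_, ?_⟩
      · rw [hu, hu', mul_assoc]
      · rw [hv, hv', mul_inv_rev, mul_assoc]
      · -- norm bookkeeping for u
        have h1 : u.norm = x₀.norm + s₀.norm + 1 := by omega
        have hx1 : (FreeGroup.mk [x]).norm ≤ 1 := by
          simpa using FreeGroup.norm_mk_le (L₁ := [x])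
        have h2 : (s₀ * FreeGroup.mk [x]).norm ≤ s₀.norm + 1 :=
          le_trans (FreeGroup.norm_mul_le _ _) (by omega)
        have h3 : u.norm ≤ x₀.norm + (s₀ * FreeGroup.mk [x]).norm := by
          rw [hu, hu', mul_assoc]
          exact FreeGroup.norm_mul_le _ _
        omega
      · have h1 : u.norm = x₀.norm + s₀.norm + 1 := by omega
        have hx1 : (FreeGroup.mk [x]).norm ≤ 1 := by
          simpa using FreeGroup.norm_mk_le (L₁ := [x])
        have h2 : (s₀ * FreeGroup.mk [x]).norm ≤ s₀.norm + 1 :=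
          le_trans (FreeGroup.norm_mul_le _ _) (by omega)
        have h3 : u.norm ≤ x₀.norm + (s₀ * FreeGroup.mk [x]).norm := by
          rw [hu, hu', mul_assoc]
          exact FreeGroup.norm_mul_le _ _
        -- hence (s₀ * mk [x]).norm = s₀.norm + 1
        omega
      · rw [huv, huv']

theorem split (u v : FreeGroup α) :
    ∃ x s y : FreeGroup α, u = x * s ∧ v = s⁻¹ * y ∧
      u.norm = x.norm + s.norm ∧ v.norm = s.norm + y.norm ∧
      (u * v).norm = x.norm + y.norm :=
  split_aux (u.norm + v.norm) u v le_rfl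

/-- Concatenating three reduced factors with no cancellation at either junction. -/
theorem nocancel3 {p q r : FreeGroup α} (hpq : (p * q).norm = p.norm + q.norm)
    (hqr : (q * r).norm = q.norm + r.norm) (hq : 1 ≤ q.norm) :
    (p * q * r).norm = p.norm + q.norm + r.norm := by
  have h1 : (p * q).toWord = p.toWord ++ q.toWord := toWord_mul_of_norm hpq
  have h2 : (q * r).toWord = q.toWord ++ r.toWord := toWord_mul_of_norm hqr
  have hQne : q.toWord ≠ [] := by
    intro h
    rw [FreeGroup.toWord_eq_nil_iff] at h
    rw [h, FreeGroup.norm_one] at hq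
    omega
  have hchain : List.Chain' R ((p.toWord ++ q.toWord) ++ r.toWord) := by
    rw [show List.Chain' R ((p.toWord ++ q.toWord) ++ r.toWord) ↔ List.IsChain R ((p.toWord ++ q.toWord) ++ r.toWord) from Iff.rfl, List.isChain_append]
    refine ⟨h1 ▸ chain_toWord (p * q), chain_toWord r, ?_⟩
    intro x hx y hy
    have hlast : (p.toWord ++ q.toWord).getLast? = q.toWord.getLast? := by
      rw [List.getLast?_append, List.getLast?_eq_getLast hQne]
      rfl
    rw [hlast] at hx
    have hch2 : List.Chain' R (q.toWord ++ r.toWord) := h2 ▸ chain_toWord (q * r)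
    exact (List.isChain_append.mp hch2).2.2 x hx y hy
  have hmk : p * q * r = FreeGroup.mk ((p.toWord ++ q.toWord) ++ r.toWord) := by
    rw [← FreeGroup.mul_mk, ← FreeGroup.mul_mk, FreeGroup.mk_toWord, FreeGroup.mk_toWord,
      FreeGroup.mk_toWord]
  rw [hmk, norm_mk_eq hchain]
  simp only [List.length_append]
  rfl

/-- Tree betweenness: if `u` lies on `[1, b]` but not on `[1, a]`, then `u` lies on `[a, b]`. -/
theorem between {u a b : FreeGroup α} (hb : b.norm = u.norm + (u⁻¹ * b).norm)
    (ha : a.norm ≠ u.norm + (u⁻¹ * a).norm) :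
    (a⁻¹ * b).norm = (a⁻¹ * u).norm + (u⁻¹ * b).norm := by
  have ha' : a.norm < u.norm + (u⁻¹ * a).norm := by
    refine lt_of_le_of_ne ?_ ha
    calc a.norm = (u * (u⁻¹ * a)).norm := by group
      _ ≤ u.norm + (u⁻¹ * a).norm := FreeGroup.norm_mul_le _ _
  obtain ⟨x, s, y, h1, h2, n1, n2, n3⟩ := split (a⁻¹ * u) (u⁻¹ * b)
  have hab : (a⁻¹ * u) * (u⁻¹ * b) = a⁻¹ * b := by group
  rw [hab] at n3
  have hs : s.norm = 0 := by
    by_contra hs0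
    have hs1 : 1 ≤ s.norm := by omega
    -- Step A : no cancellation in u * s⁻¹
    have hA : (u * s⁻¹).norm = u.norm + s.norm := by
      have hb' : b = u * s⁻¹ * y := by
        have : b = u * (u⁻¹ * b) := by group
        rw [this, h2]; group
      have le1 : (u * s⁻¹).norm ≤ u.norm + s.norm := by
        calc (u * s⁻¹).norm ≤ u.norm + s⁻¹.norm := FreeGroup.norm_mul_le _ _
          _ = u.norm + s.norm := by rw [FreeGroup.norm_inv_eq]
      have le2 : b.norm ≤ (u * s⁻¹).norm + y.norm := hb' ▸ FreeGroup.norm_mul_le _ _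
      omega
    -- Step B : no cancellation in s⁻¹ * x⁻¹
    have hB : (s⁻¹ * x⁻¹).norm = s⁻¹.norm + x⁻¹.norm := by
      have : s⁻¹ * x⁻¹ = (x * s)⁻¹ := by group
      rw [this, FreeGroup.norm_inv_eq, ← h1, FreeGroup.norm_inv_eq, FreeGroup.norm_inv_eq]
      have : (a⁻¹ * u).norm = x.norm + s.norm := n1
      omega
    have hs1' : 1 ≤ s⁻¹.norm := by rw [FreeGroup.norm_inv_eq]; omega
    have hA' : (u * s⁻¹).norm = u.norm + s⁻¹.norm := by rw [FreeGroup.norm_inv_eq]; omega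
    have hC := nocancel3 hA' hB hs1'
    have hCa : u * s⁻¹ * x⁻¹ = a := by
      have hxs : x * s = a⁻¹ * u := h1.symm
      have : u * (x * s)⁻¹ = u * (u⁻¹ * a) := by rw [hxs]; group
      calc u * s⁻¹ * x⁻¹ = u * (x * s)⁻¹ := by group
        _ = u * (u⁻¹ * a) := this
        _ = a := by group
    rw [hCa] at hC
    have hinv : (u⁻¹ * a).norm = (a⁻¹ * u).norm := by
      rw [show u⁻¹ * a = (a⁻¹ * u)⁻¹ by group, FreeGroup.norm_inv_eq]
    rw [FreeGroup.norm_inv_eq, FreeGroup.norm_inv_eq] at hC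
    omega
  have hseq : s = 1 := FreeGroup.norm_eq_zero.mp hs
  have hinv : (u⁻¹ * a).norm = (a⁻¹ * u).norm := by
    rw [show u⁻¹ * a = (a⁻¹ * u)⁻¹ by group, FreeGroup.norm_inv_eq]
  omega

/-- Homomorphisms of f.g. free groups are Lipschitz for the word norm. -/
theorem lip {β : Type*} [DecidableEq β] [Fintype β] (ψ : FreeGroup β →* FreeGroup β) :
    ∃ C : ℕ, ∀ z : FreeGroup β, (ψ z).norm ≤ C * z.norm := by
  set C := Finset.univ.sup (fun i : β => (ψ (FreeGroup.of i)).norm) with hC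
  refine ⟨C, ?_⟩
  have key : ∀ L : List (β × Bool), (ψ (FreeGroup.mk L)).norm ≤ C * L.length := by
    intro L
    induction L with
    | nil =>
      have : FreeGroup.mk ([] : List (β × Bool)) = 1 := FreeGroup.one_eq_mk.symm
      simp [this, FreeGroup.norm_one]
    | cons a T ih =>
      have hsplit : FreeGroup.mk (a :: T) = FreeGroup.mk [a] * FreeGroup.mk T := by
        rw [FreeGroup.mul_mk]; rfl
      have hsingle : (ψ (FreeGroup.mk [a])).norm ≤ C := by
        rcases a with ⟨i, b⟩
        cases b with
        | true =>
          have : FreeGroup.mk [(i, true)] = FreeGroup.of i := rfl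
          rw [this]
          exact Finset.le_sup (f := fun j : β => (ψ (FreeGroup.of j)).norm) (Finset.mem_univ i)
        | false =>
          have : FreeGroup.mk [(i, false)] = (FreeGroup.of i)⁻¹ := by
            rw [show FreeGroup.of i = FreeGroup.mk [(i, true)] from rfl, FreeGroup.inv_mk]
            rfl
          rw [this, _root_.map_inv, FreeGroup.norm_inv_eq]
          exact Finset.le_sup (f := fun j : β => (ψ (FreeGroup.of j)).norm) (Finset.mem_univ i)
      calc (ψ (FreeGroup.mk (a :: T))).norm
          = (ψ (FreeGroup.mk [a]) * ψ (FreeGroup.mk T)).norm := by rw [hsplit, _root_.map_mul]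
        _ ≤ (ψ (FreeGroup.mk [a])).norm + (ψ (FreeGroup.mk T)).norm := FreeGroup.norm_mul_le _ _
        _ ≤ C + C * T.length := Nat.add_le_add hsingle ih
        _ = C * (a :: T).length := by rw [List.length_cons, Nat.mul_succ, Nat.add_comm]
  intro z
  have := key z.toWord
  rw [FreeGroup.mk_toWord] at this
  exact this

end BCL

open BCL

theorem bounded_cancellation (m : ℕ) (φ : MulAut (FreeGroup (Fin m))) :
    ∃ B : ℕ, ∀ u v : FreeGroup (Fin m),
      FreeGroup.norm (u * v) = FreeGroup.norm u + FreeGroup.norm v →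
      (FreeGroup.norm (φ u) : ℤ) + (FreeGroup.norm (φ v) : ℤ)
        - (FreeGroup.norm (φ (u * v)) : ℤ) ≤ 2 * B := by
  classical
  obtain ⟨K, hK⟩ := lip (φ : FreeGroup (Fin m) →* FreeGroup (Fin m))
  obtain ⟨L, hL⟩ := lip ((φ.symm : MulAut (FreeGroup (Fin m))) :
    FreeGroup (Fin m) →* FreeGroup (Fin m))
  refine ⟨K * L, ?_⟩
  intro u v h
  by_cases hu1 : u = 1
  · subst hu1
    have h1 : φ (1 : FreeGroup (Fin m)) = 1 := _root_.map_one _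
    simp only [one_mul, h1, FreeGroup.norm_one, Nat.cast_zero]
    have : (0:ℤ) ≤ ((K * L : ℕ) : ℤ) := Int.natCast_nonneg _
    omega
  -- setup
  set W := (φ (u * v)).toWord with hW
  set n := W.length with hn
  have hnval : FreeGroup.norm (φ (u * v)) = n := rfl
  set w : ℕ → FreeGroup (Fin m) := fun t => FreeGroup.mk (W.take t) with hw
  set g : ℕ → FreeGroup (Fin m) := fun t => φ.symm (w t) with hg
  set P : ℕ → Prop := fun t => (g t).norm = u.norm + (u⁻¹ * g t).norm with hP
  have hwn : w n = φ (u * v) := by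
    rw [hw]; simp only [hn, List.take_length]
    rw [hW, FreeGroup.mk_toWord]
  have hgn : g n = u * v := by rw [hg]; simp only [hwn]; exact φ.symm_apply_apply _
  have hPn : P n := by
    rw [hP]; simp only [hgn]
    have : u⁻¹ * (u * v) = v := by group
    rw [this]; exact h
  have hP0 : ¬ P 0 := by
    rw [hP]
    have hw0 : w 0 = 1 := by rw [hw]; simp; rw [← FreeGroup.one_eq_mk]
    have hg0 : g 0 = 1 := by rw [hg]; simp only [hw0, _root_.map_one]
    simp only [hg0, mul_one, FreeGroup.norm_one, FreeGroup.norm_inv_eq]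
    intro hcon
    exact hu1 (FreeGroup.norm_eq_zero.mp (by omega))
  have hex : ∃ t, P t := ⟨n, hPn⟩
  set t := Nat.find hex with htdef
  have ht : P t := Nat.find_spec hex
  have htn : t ≤ n := Nat.find_le hPn
  have ht0 : t ≠ 0 := by intro hc; rw [hc] at ht; exact hP0 ht
  have hprev : ¬ P (t - 1) := Nat.find_min hex (by omega)
  -- the jump from g (t-1) to g t is at most L
  have hjump : ((g (t - 1))⁻¹ * g t).norm ≤ L := by
    have hstep : (w (t - 1))⁻¹ * w t = FreeGroup.mk (W[t-1]?.toList) := by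
      have htake : W.take t = W.take (t - 1) ++ W[t-1]?.toList := by
        conv_lhs => rw [show t = (t - 1) + 1 by omega]
        exact List.take_succ
      rw [hw]
      simp only
      rw [htake, ← FreeGroup.mul_mk, inv_mul_cancel_left]
    have : (g (t - 1))⁻¹ * g t = φ.symm ((w (t - 1))⁻¹ * w t) := by
      rw [hg]; simp only [_root_.map_mul, _root_.map_inv]
    rw [this, hstep]
    calc (φ.symm (FreeGroup.mk (W[t-1]?.toList))).norm
        ≤ L * (FreeGroup.mk (W[t-1]?.toList)).norm := hL _
      _ ≤ L * 1 := by
          have h1 : (FreeGroup.mk (W[t-1]?.toList)).norm ≤ (W[t-1]?.toList).length :=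
            FreeGroup.norm_mk_le
          have h2 : (W[t-1]?.toList).length ≤ 1 := by
            cases W[t-1]? <;> simp
          exact Nat.mul_le_mul_left L (le_trans h1 h2)
      _ = L := Nat.mul_one L
  -- betweenness: u lies on [g (t-1), g t]
  have hbet := between (ht : (g t).norm = u.norm + (u⁻¹ * g t).norm) hprev
  have hdelta : (u⁻¹ * g t).norm ≤ L := by omega
  -- assemble
  have hgtinv : φ (g t) = w t := φ.apply_symm_apply _
  have hfu : (φ u).norm ≤ t + K * L := by
    have hdecomp : φ u = w t * φ ((g t)⁻¹ * u) := by
      rw [_root_.map_mul, _root_.map_inv, hgtinv]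
      group
    have hKd : (φ ((g t)⁻¹ * u)).norm ≤ K * L := by
      calc (φ ((g t)⁻¹ * u)).norm ≤ K * ((g t)⁻¹ * u).norm := hK _
        _ = K * (u⁻¹ * g t).norm := by
            rw [show (g t)⁻¹ * u = (u⁻¹ * g t)⁻¹ by group, FreeGroup.norm_inv_eq]
        _ ≤ K * L := Nat.mul_le_mul_left K hdelta
    have hwt : (w t).norm ≤ t := by
      calc (w t).norm ≤ (W.take t).length := FreeGroup.norm_mk_le
        _ ≤ t := by simp
    calc (φ u).norm ≤ (w t).norm + (φ ((g t)⁻¹ * u)).norm :=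
          hdecomp ▸ FreeGroup.norm_mul_le _ _
      _ ≤ t + K * L := Nat.add_le_add hwt hKd
  have hfv : (φ v).norm ≤ K * L + (n - t) := by
    have hdecomp : φ v = (φ ((g t)⁻¹ * u))⁻¹ * ((w t)⁻¹ * φ (u * v)) := by
      rw [_root_.map_mul, _root_.map_inv, hgtinv, _root_.map_mul]
      group
    have hrest : (w t)⁻¹ * φ (u * v) = FreeGroup.mk (W.drop t) := by
      have : φ (u * v) = w t * FreeGroup.mk (W.drop t) := by
        rw [hw]; simp only
        rw [FreeGroup.mul_mk, List.take_append_drop, hW, FreeGroup.mk_toWord]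
      rw [this]; group
    have hKd : ((φ ((g t)⁻¹ * u))⁻¹).norm ≤ K * L := by
      rw [FreeGroup.norm_inv_eq]
      calc (φ ((g t)⁻¹ * u)).norm ≤ K * ((g t)⁻¹ * u).norm := hK _
        _ = K * (u⁻¹ * g t).norm := by
            rw [show (g t)⁻¹ * u = (u⁻¹ * g t)⁻¹ by group, FreeGroup.norm_inv_eq]
        _ ≤ K * L := Nat.mul_le_mul_left K hdelta
    have hrest_norm : ((w t)⁻¹ * φ (u * v)).norm ≤ n - t := by
      rw [hrest]
      calc (FreeGroup.mk (W.drop t)).norm ≤ (W.drop t).length := FreeGroup.norm_mk_le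
        _ = n - t := by rw [List.length_drop, hn]
    calc (φ v).norm ≤ ((φ ((g t)⁻¹ * u))⁻¹).norm + ((w t)⁻¹ * φ (u * v)).norm :=
          hdecomp ▸ FreeGroup.norm_mul_le _ _
      _ ≤ K * L + (n - t) := Nat.add_le_add hKd hrest_norm
  have hmain : (φ u).norm + (φ v).norm ≤ n + 2 * (K * L) := by omega
  rw [hnval]
  have hZ : ((φ u).norm : ℤ) + ((φ v).norm : ℤ) ≤ (n : ℤ) + 2 * ((K * L : ℕ) : ℤ) := by
    exact_mod_cast hmain
  omega
end

section
/- Proposition (conditioning the automorphism): Let φ be a positive automorphism of the free group F with basis a_1, …, a_m. Then there exists a positive integer k such that φ_0 := φ^k satisfies: (1) every basis letter x appears in φ_0(x); (2) every basis letter x that is exponential for φ_0 appears at least 3 times in φ_0(x); (3) for every basis letter x, every y ∈ supp_{φ_0}(x) appears in φ_0(x); (4) for every basis letter x and every j ≥ 1, the leftmost and the rightmost letters of the positive word φ_0^j(x) are the same as those of φ_0(x); (5) for every basis letter x, every j ≥ 1 and every z ∈ supp_{φ_0}(x), the positive word φ_0^j(x) contains a letter from the stratum Σ_{φ_0}(z),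 and its leftmost (respectively rightmost) letter belonging to Σ_{φ_0}(z) is the same as the leftmost (respectively rightmost) letter of φ_0(x) belonging to Σ_{φ_0}(z). -/
/-- `φ` is a positive automorphism: each reduced word `φ(aᵢ)` contains no inverse
letters. -/
def IsPositiveAut (m : ℕ) (φ : MulAut (FreeGroup (Fin m))) : Prop :=
  ∀ i : Fin m, ∀ p ∈ (φ (FreeGroup.of i)).toWord, p.2 = true

/-- The basis letter `y` appears in the positive word `ψ^j(x)`. -/
def Appears (m : ℕ) (ψ : MulAut (FreeGroup (Fin m))) (j : ℕ) (y x : Fin m) : Prop :=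
  (y, true) ∈ ((ψ ^ j) (FreeGroup.of x)).toWord

/-- The support of a basis letter `x`: all basis letters appearing in some `ψ^j(x)`,
`j ≥ 0`. -/
def supp (m : ℕ) (ψ : MulAut (FreeGroup (Fin m))) (x : Fin m) : Set (Fin m) :=
  { y | ∃ j : ℕ, Appears m ψ j y x }

/-- The stratum of a basis letter `x`: those `y ∈ supp x` with `supp y = supp x`. -/
def stratum (m : ℕ) (ψ : MulAut (FreeGroup (Fin m))) (x : Fin m) : Set (Fin m) :=
  { y ∈ supp m ψ x | supp m ψ y = supp m ψ x }

/-- A basis letter `x` is exponential for `ψ` if its stratum contains another letter. -/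
def IsExponential (m : ℕ) (ψ : MulAut (FreeGroup (Fin m))) (x : Fin m) : Prop :=
  ∃ y ∈ stratum m ψ x, y ≠ x

/-- `a` is the first entry of the list `l` satisfying `P`. -/
def IsFirstSuchThat {α : Type*} (P : α → Prop) (l : List α) (a : α) : Prop :=
  ∃ k : ℕ, ∃ h : k < l.length, l.get ⟨k, h⟩ = a ∧ P a ∧
    ∀ k' : ℕ, ∀ h' : k' < l.length, k' < k → ¬ P (l.get ⟨k', h'⟩)

/-- `a` is the last entry of the list `l` satisfying `P`. -/
def IsLastSuchThat {α : Type*} (P : α → Prop) (l : List α) (a : α) : Prop :=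
  IsFirstSuchThat P l.reverse a

/-- `ψ` is conditioned (conclusion (1)–(5) of the conditioning proposition). -/
def Conditioned (m : ℕ) (ψ : MulAut (FreeGroup (Fin m))) : Prop :=
  -- (1) every basis letter appears in its own image
  (∀ x : Fin m, Appears m ψ 1 x x) ∧
  -- (2) every exponential letter appears at least 3 times in its own image
  (∀ x : Fin m, IsExponential m ψ x → 3 ≤ (ψ (FreeGroup.of x)).toWord.count (x, true)) ∧
  -- (3) every letter of the support of `x` appears in `ψ(x)`
  (∀ x : Fin m, ∀ y ∈ supp m ψ x, Appears m ψ 1 y x) ∧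
  -- (4) the leftmost and rightmost letters of `ψ^j(x)` agree with those of `ψ(x)`
  (∀ x : Fin m, ∀ j : ℕ, 1 ≤ j →
    ((ψ ^ j) (FreeGroup.of x)).toWord.head? = (ψ (FreeGroup.of x)).toWord.head? ∧
    ((ψ ^ j) (FreeGroup.of x)).toWord.getLast? = (ψ (FreeGroup.of x)).toWord.getLast?) ∧
  -- (5) for every stratum meeting the support, the extreme letters from that stratum
  -- in `ψ^j(x)` agree with those of `ψ(x)`
  (∀ x : Fin m, ∀ j : ℕ, 1 ≤ j → ∀ z ∈ supp m ψ x,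
    (∃ p : Fin m × Bool,
      IsFirstSuchThat (fun q => q.1 ∈ stratum m ψ z)
        (((ψ ^ j) (FreeGroup.of x)).toWord) p ∧
      IsFirstSuchThat (fun q => q.1 ∈ stratum m ψ z)
        ((ψ (FreeGroup.of x)).toWord) p) ∧
    (∃ p : Fin m × Bool,
      IsLastSuchThat (fun q => q.1 ∈ stratum m ψ z)
        (((ψ ^ j) (FreeGroup.of x)).toWord) p ∧
      IsLastSuchThat (fun q => q.1 ∈ stratum m ψ z)
        ((ψ (FreeGroup.of x)).toWord) p))


open List

namespace Cond

variable {m : ℕ}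

/-- Positive word as free group element. -/
def pw (l : List (Fin m)) : FreeGroup (Fin m) :=
  FreeGroup.mk (l.map (fun a => (a, true)))

lemma reduce_pos (l : List (Fin m)) :
    FreeGroup.reduce (l.map (fun a => (a, true))) = l.map (fun a => (a, true)) := by
  induction l with
  | nil => rfl
  | cons a l ih =>
    simp only [List.map_cons, FreeGroup.reduce.cons, ih]
    cases hl : l.map (fun a => (a, true)) with
    | nil => rfl
    | cons b t =>
      have hb : b.2 = true := by
        have : b ∈ l.map (fun a => (a, true)) := by rw [hl]; exact List.mem_cons_self
        rcases List.mem_map.1 this with ⟨c, _, rfl⟩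
        rfl
      simp [hb]

lemma pw_toWord (l : List (Fin m)) : (pw l).toWord = l.map (fun a => (a, true)) := by
  rw [pw, FreeGroup.toWord_mk, reduce_pos]

lemma pw_append (l₁ l₂ : List (Fin m)) : pw (l₁ ++ l₂) = pw l₁ * pw l₂ := by
  rw [pw, pw, pw, FreeGroup.mul_mk, List.map_append]

lemma pw_singleton (a : Fin m) : pw [a] = FreeGroup.of a := rfl

/-- Substitution on letter lists. -/
def subst (f : Fin m → List (Fin m)) (l : List (Fin m)) : List (Fin m) := l.flatMap f

lemma subst_nil (f : Fin m → List (Fin m)) : subst f [] = [] := rfl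

lemma subst_cons (f : Fin m → List (Fin m)) (a : Fin m) (l : List (Fin m)) :
    subst f (a :: l) = f a ++ subst f l := rfl

lemma subst_append (f : Fin m → List (Fin m)) (l₁ l₂ : List (Fin m)) :
    subst f (l₁ ++ l₂) = subst f l₁ ++ subst f l₂ := by
  simp [subst]

lemma subst_singleton (f : Fin m → List (Fin m)) (a : Fin m) : subst f [a] = f a := by
  simp [subst]

lemma mem_subst {f : Fin m → List (Fin m)} {l : List (Fin m)} {b : Fin m} :
    b ∈ subst f l ↔ ∃ a ∈ l, b ∈ f a := List.mem_flatMap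

/-- `j`-th iterate of the substitution applied to a single letter. -/
def itf (f : Fin m → List (Fin m)) (j : ℕ) (x : Fin m) : List (Fin m) :=
  (subst f)^[j] [x]

lemma itf_zero (f : Fin m → List (Fin m)) (x : Fin m) : itf f 0 x = [x] := rfl

lemma itf_one (f : Fin m → List (Fin m)) (x : Fin m) : itf f 1 x = f x := by
  simp [itf, subst_singleton]

/-- iterate of substitution is substitution by an iterated system -/
lemma iterate_subst (f : Fin m → List (Fin m)) (k : ℕ) (l : List (Fin m)) :
    (subst f)^[k] l = subst (fun a => itf f k a) l := by
  induction l with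
  | nil =>
    have : ∀ k : ℕ, (subst f)^[k] ([] : List (Fin m)) = [] := by
      intro k; induction k with
      | zero => rfl
      | succ k ih => rw [Function.iterate_succ_apply, subst_nil, ih]
    rw [this, subst_nil]
  | cons a l ih =>
    have hcons : (a :: l) = [a] ++ l := rfl
    have happ : ∀ (k : ℕ) (l₁ l₂ : List (Fin m)),
        (subst f)^[k] (l₁ ++ l₂) = (subst f)^[k] l₁ ++ (subst f)^[k] l₂ := by
      intro k; induction k with
      | zero => intro l₁ l₂; rfl
      | succ k ih2 =>
        intro l₁ l₂
        rw [Function.iterate_succ_apply, subst_append, ih2,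
          ← Function.iterate_succ_apply, ← Function.iterate_succ_apply]
    rw [hcons, happ, ih, subst_append, subst_singleton]
    rfl

lemma itf_add (f : Fin m → List (Fin m)) (j₁ j₂ : ℕ) (x : Fin m) :
    itf f (j₁ + j₂) x = (subst f)^[j₁] (itf f j₂ x) := by
  rw [itf, Function.iterate_add_apply]; rfl

lemma itf_succ' (f : Fin m → List (Fin m)) (j : ℕ) (x : Fin m) :
    itf f (j + 1) x = subst f (itf f j x) := by
  rw [itf, Function.iterate_succ_apply']; rfl

/-- membership monotone under composition -/
lemma mem_itf_of_mem {f : Fin m → List (Fin m)} {y : Fin m} {l : List (Fin m)}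
    (hy : y ∈ l) (k : ℕ) {b : Fin m} (hb : b ∈ itf f k y) : b ∈ (subst f)^[k] l := by
  rw [iterate_subst]
  exact mem_subst.2 ⟨y, hy, hb⟩

lemma itf_trans {f : Fin m → List (Fin m)} {x y b : Fin m} {j₁ j₂ : ℕ}
    (hy : y ∈ itf f j₁ x) (hb : b ∈ itf f j₂ y) : b ∈ itf f (j₂ + j₁) x := by
  rw [itf_add]
  exact mem_itf_of_mem hy j₂ hb

end Cond

namespace Cond

variable {m : ℕ}

section Bridge

variable (φ : MulAut (FreeGroup (Fin m)))

/-- letter system of a positive automorphism -/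
def sys (φ : MulAut (FreeGroup (Fin m))) : Fin m → List (Fin m) :=
  fun i => ((φ (FreeGroup.of i)).toWord).map Prod.fst

variable {φ}

lemma word_eq (hpos : ∀ i : Fin m, ∀ p ∈ (φ (FreeGroup.of i)).toWord, p.2 = true)
    (i : Fin m) : (φ (FreeGroup.of i)).toWord = (sys φ i).map (fun a => (a, true)) := by
  rw [sys, List.map_map]
  conv_lhs => rw [← List.map_id ((φ (FreeGroup.of i)).toWord)]
  apply List.map_congr_left
  intro p hp
  have := hpos i p hp
  cases p with
  | mk a b => simp_all [Function.comp]

lemma apply_pw (hpos : ∀ i : Fin m, ∀ p ∈ (φ (FreeGroup.of i)).toWord, p.2 = true)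
    (l : List (Fin m)) : φ (pw l) = pw (subst (sys φ) l) := by
  induction l with
  | nil =>
    have : pw ([] : List (Fin m)) = 1 := rfl
    rw [subst_nil, this, map_one]
  | cons a l ih =>
    have hcons : pw (a :: l) = pw [a] * pw l := (pw_append [a] l).symm
    rw [hcons, map_mul, ih, subst_cons, pw_append, pw_singleton]
    congr 1
    have : φ (FreeGroup.of a) = FreeGroup.mk ((φ (FreeGroup.of a)).toWord) :=
      (FreeGroup.mk_toWord).symm
    rw [this, word_eq hpos a]
    rfl

lemma bridge (hpos : ∀ i : Fin m, ∀ p ∈ (φ (FreeGroup.of i)).toWord, p.2 = true)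
    (j : ℕ) (x : Fin m) : ((φ ^ j) (FreeGroup.of x)) = pw (itf (sys φ) j x) := by
  induction j with
  | zero => rfl
  | succ j ih =>
    have h1 : (φ ^ (j + 1)) (FreeGroup.of x) = φ ((φ ^ j) (FreeGroup.of x)) := by
      rw [pow_succ']; rfl
    rw [h1, ih, apply_pw hpos, itf_succ']

lemma bridge_toWord (hpos : ∀ i : Fin m, ∀ p ∈ (φ (FreeGroup.of i)).toWord, p.2 = true)
    (j : ℕ) (x : Fin m) :
    ((φ ^ j) (FreeGroup.of x)).toWord = (itf (sys φ) j x).map (fun a => (a, true)) := by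
  rw [bridge hpos, pw_toWord]

end Bridge

end Cond

namespace Cond
variable {m : ℕ}


/-- abelianization map -/
noncomputable def pim (m : ℕ) : FreeGroup (Fin m) →* Multiplicative (Fin m → ℤ) :=
  FreeGroup.lift (fun i => Multiplicative.ofAdd (Pi.single i 1))

lemma pim_of (i : Fin m) :
    Multiplicative.toAdd (pim m (FreeGroup.of i)) = Pi.single i 1 := by
  rw [pim, FreeGroup.lift_apply_of]; rfl

/-- abelianization matrix of an endomorphism -/
noncomputable def amat (σ : FreeGroup (Fin m) →* FreeGroup (Fin m)) :
    Matrix (Fin m) (Fin m) ℤ :=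
  Matrix.of fun y x => Multiplicative.toAdd (pim m (σ (FreeGroup.of x))) y

lemma amat_comm (σ : FreeGroup (Fin m) →* FreeGroup (Fin m)) (w : FreeGroup (Fin m)) :
    Multiplicative.toAdd (pim m (σ w)) = (amat σ).mulVec (Multiplicative.toAdd (pim m w)) := by
  induction w using FreeGroup.induction_on with
  | C1 =>
    simp only [map_one, toAdd_one]
    rw [Matrix.mulVec_zero]
  | of x =>
    have h1 : Multiplicative.toAdd (pim m (FreeGroup.of x)) = Pi.single x 1 := pim_of x
    show Multiplicative.toAdd (pim m (σ (FreeGroup.of x)))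
      = (amat σ).mulVec (Multiplicative.toAdd (pim m (FreeGroup.of x)))
    rw [h1, Matrix.mulVec_single]
    funext y
    simp [amat]
  | inv_of x ih =>
    show Multiplicative.toAdd (pim m (σ (FreeGroup.of x)⁻¹))
      = (amat σ).mulVec (Multiplicative.toAdd (pim m (FreeGroup.of x)⁻¹))
    simp only [map_inv, toAdd_inv, Matrix.mulVec_neg]
    exact congrArg (fun v => -v) ih
  | mul x y ihx ihy =>
    simp only [map_mul, toAdd_mul, Matrix.mulVec_add, ihx, ihy]

lemma amat_mul_inv (φ : MulAut (FreeGroup (Fin m))) :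
    amat (φ : FreeGroup (Fin m) →* FreeGroup (Fin m)) *
      amat ((φ⁻¹ : MulAut (FreeGroup (Fin m))) : FreeGroup (Fin m) →* FreeGroup (Fin m)) = 1 := by
  set σ := (φ : FreeGroup (Fin m) →* FreeGroup (Fin m))
  set τ := ((φ⁻¹ : MulAut (FreeGroup (Fin m))) : FreeGroup (Fin m) →* FreeGroup (Fin m))
  funext y x
  have h1 : (amat σ * amat τ) y x = ((amat σ).mulVec fun k => amat τ k x) y := by
    rw [Matrix.mul_apply, Matrix.mulVec, dotProduct]
  have h2 : (fun k => amat τ k x) = Multiplicative.toAdd (pim m (τ (FreeGroup.of x))) := rfl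
  have h3 := amat_comm σ (τ (FreeGroup.of x))
  have h4 : σ (τ (FreeGroup.of x)) = FreeGroup.of x := by
    show φ (φ⁻¹ (FreeGroup.of x)) = FreeGroup.of x
    exact φ.apply_symm_apply _
  rw [h1, h2, ← h3, h4, pim_of]
  by_cases hxy : y = x <;> simp [Matrix.one_apply, hxy, Pi.single_apply]



lemma pim_pw (l : List (Fin m)) :
    Multiplicative.toAdd (pim m (pw l)) = fun y => (l.count y : ℤ) := by
  induction l with
  | nil =>
    have : pw ([] : List (Fin m)) = 1 := rfl
    rw [this, map_one, toAdd_one]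
    funext y; simp
  | cons a l ih =>
    have hcons : pw (a :: l) = pw [a] * pw l := (pw_append [a] l).symm
    rw [hcons, map_mul, toAdd_mul, ih, pw_singleton, pim_of]
    funext y
    simp only [Pi.add_apply, Pi.single_apply, List.count_cons]
    by_cases hay : a = y
    · subst hay; simp [add_comm]
    · have : ¬ (y == a) = true := by simpa using fun h => hay h.symm
      simp [hay, this, Ne.symm hay]

/-- every letter recurs, by the rank argument -/
theorem recurrence (φ : MulAut (FreeGroup (Fin m))) (f : Fin m → List (Fin m))
    (hw : ∀ i, φ (FreeGroup.of i) = pw (f i)) (x : Fin m) :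
    ∃ j : ℕ, x ∈ itf f (j + 1) x := by
  by_contra hx
  push_neg at hx
  classical
  -- the support sets
  set Rs : Set (Fin m) := {y | ∃ j, y ∈ itf f j x} with hRs
  set Ts : Set (Fin m) := {y | ∃ j, y ∈ itf f (j + 1) x} with hTs
  have hxR : x ∈ Rs := ⟨0, by simp [itf_zero]⟩
  have hxT : x ∉ Ts := fun ⟨j, hj⟩ => hx j hj
  have hTR : Ts ⊆ Rs := fun y ⟨j, hj⟩ => ⟨j + 1, hj⟩
  have hclose : ∀ y ∈ Rs, ∀ u ∈ f y, u ∈ Ts := by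
    rintro y ⟨j, hj⟩ u hu
    refine ⟨j, ?_⟩
    rw [itf_succ']
    exact mem_subst.2 ⟨y, hj, hu⟩
  -- linear algebra over ℚ
  set σ := (φ : FreeGroup (Fin m) →* FreeGroup (Fin m))
  set τ := ((φ⁻¹ : MulAut (FreeGroup (Fin m))) : FreeGroup (Fin m) →* FreeGroup (Fin m))
  set Mq : Matrix (Fin m) (Fin m) ℚ := (amat σ).map ⇑(Int.castRingHom ℚ) with hMq
  set Mq' : Matrix (Fin m) (Fin m) ℚ := (amat τ).map ⇑(Int.castRingHom ℚ) with hMq'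
  have hinv2 : Mq' * Mq = 1 := by
    have h1 : amat τ * amat σ = 1 := by
      have := amat_mul_inv (φ⁻¹)
      simpa using this
    rw [hMq, hMq', ← Matrix.map_mul, h1]
    exact Matrix.map_one _ (by simp) (by simp)
  set Lq : (Fin m → ℚ) →ₗ[ℚ] (Fin m → ℚ) := Matrix.toLin' Mq with hLq
  have hinj : Function.Injective Lq := by
    have hcomp : (Matrix.toLin' Mq') ∘ₗ Lq = LinearMap.id := by
      rw [hLq, ← Matrix.toLin'_mul, hinv2, Matrix.toLin'_one]
    intro a b hab
    have : (Matrix.toLin' Mq') (Lq a) = (Matrix.toLin' Mq') (Lq b) := by rw [hab]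
    rwa [← LinearMap.comp_apply, ← LinearMap.comp_apply, hcomp, LinearMap.id_apply,
      LinearMap.id_apply] at this
  -- column of Lq at basis vector x' is the count vector of f x'
  have hcol : ∀ x' : Fin m, Lq (Pi.single x' 1) = fun y => ((f x').count y : ℚ) := by
    intro x'
    rw [hLq, Matrix.toLin'_apply, Matrix.mulVec_single]
    funext y
    have h1 : (amat σ) y x' = ((f x').count y : ℤ) := by
      show Multiplicative.toAdd (pim m (σ (FreeGroup.of x'))) y = _
      have : σ (FreeGroup.of x') = pw (f x') := hw x'
      rw [this, pim_pw]
    simp [hMq, Matrix.map_apply, h1]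
  set e : Fin m → (Fin m → ℚ) := fun i => Pi.single i 1 with he
  have heinj : Function.Injective e := by
    intro i j hij
    by_contra hne
    have h1 : e i i = 1 := by simp [he]
    have h2 : e j i = 0 := by simp [he, Pi.single_apply, Ne.symm hne]
    rw [hij] at h1
    rw [h1] at h2
    norm_num at h2
  set S : Submodule ℚ (Fin m → ℚ) := Submodule.span ℚ (e '' Rs) with hS
  set U : Submodule ℚ (Fin m → ℚ) := Submodule.span ℚ (e '' Ts) with hU
  -- vectors supported in Ts lie in U
  have hvec : ∀ v : Fin m → ℚ, (∀ i, v i ≠ 0 → i ∈ Ts) → v ∈ U := by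
    intro v hv
    have hexp : v = ∑ i : Fin m, v i • e i := by
      rw [he]
      conv_lhs => rw [pi_eq_sum_univ v]
      refine Finset.sum_congr rfl fun i _ => ?_
      congr 1
      funext j
      simp [Pi.single_apply, eq_comm]
    rw [hexp]
    refine Submodule.sum_mem _ fun i _ => ?_
    by_cases hvi : v i = 0
    · rw [hvi, zero_smul]; exact Submodule.zero_mem _
    · exact Submodule.smul_mem _ _ (Submodule.subset_span ⟨i, hv i hvi, rfl⟩)
  have hmapsto : ∀ w ∈ S, Lq w ∈ U := by
    intro w hw2
    have : S ≤ Submodule.comap Lq U := by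
      rw [hS, Submodule.span_le]
      rintro _ ⟨y, hy, rfl⟩
      simp only [SetLike.mem_coe, Submodule.mem_comap]
      rw [hcol y]
      refine hvec _ fun i hi => ?_
      have : (f y).count i ≠ 0 := by
        intro h0; rw [h0] at hi; simp at hi
      have hmem : i ∈ f y := by
        rw [← List.count_pos_iff]
        omega
      exact hclose y hy i hmem
    exact this hw2
  -- finrank comparison
  haveI : Fintype ↑(e '' Rs) := Fintype.ofFinite _
  haveI : Fintype ↑(e '' Ts) := Fintype.ofFinite _
  haveI : Fintype ↑Rs := Fintype.ofFinite _
  haveI : Fintype ↑Ts := Fintype.ofFinite _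
  have hbasis : LinearIndependent ℚ (fun v : ↑(e '' Rs) => (v : Fin m → ℚ)) := by
    have h1 : LinearIndependent ℚ (fun v : ↑(Set.range e) => (v : Fin m → ℚ)) := by
      have hb := (Pi.basisFun ℚ (Fin m)).linearIndependent
      have hbe : ⇑(Pi.basisFun ℚ (Fin m)) = e := by
        funext i; rw [Pi.basisFun_apply]
      rw [hbe] at hb
      exact (linearIndepOn_id_range_iff heinj).2 hb
    exact LinearIndepOn.mono (v := id) h1 (Set.image_subset_range e Rs)
  have hrankS : Module.finrank ℚ ↥S = (e '' Rs).toFinset.card :=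
    finrank_span_set_eq_card hbasis
  have hcards : (e '' Rs).toFinset.card = Fintype.card ↑Rs := by
    rw [Set.toFinset_card]
    exact Fintype.card_congr (Equiv.Set.image e Rs heinj).symm
  -- restriction map is injective
  haveI : Module.Finite ℚ ↥U := by
    infer_instance
  have hle : Module.finrank ℚ ↥S ≤ Module.finrank ℚ ↥U := by
    refine LinearMap.finrank_le_finrank_of_injective
      (f := Lq.restrict hmapsto) ?_
    intro ⟨a, ha⟩ ⟨b, hb⟩ hab
    have : Lq a = Lq b := congrArg Subtype.val hab
    exact Subtype.ext (hinj this)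
  have hrankU : Module.finrank ℚ ↥U ≤ (e '' Ts).toFinset.card :=
    finrank_span_le_card _
  have hcardt : (e '' Ts).toFinset.card = Fintype.card ↑Ts := by
    rw [Set.toFinset_card]
    exact Fintype.card_congr (Equiv.Set.image e Ts heinj).symm
  have hlt : Fintype.card ↑Ts < Fintype.card ↑Rs := by
    apply Set.card_lt_card
    exact ⟨hTR, fun h => hxT (h hxR)⟩
  omega



section Combinatorics

variable {g : Fin m → List (Fin m)}

lemma mem_itf_succ (hg : ∀ a, a ∈ g a) {y x : Fin m} {j : ℕ} (hy : y ∈ itf g j x) :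
    y ∈ itf g (j + 1) x := by
  rw [itf_succ']
  exact mem_subst.2 ⟨y, hy, hg y⟩

lemma mem_itf_mono (hg : ∀ a, a ∈ g a) {y x : Fin m} {j j' : ℕ} (hjj : j ≤ j')
    (hy : y ∈ itf g j x) : y ∈ itf g j' x := by
  induction j' with
  | zero => rw [Nat.le_zero] at hjj; subst hjj; exact hy
  | succ j'' ih =>
    rcases Nat.lt_or_ge j (j'' + 1) with hlt | hge
    · exact mem_itf_succ hg (ih (Nat.lt_succ_iff.1 hlt))
    · have : j = j'' + 1 := le_antisymm hjj hge
      subst this; exact hy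

/-- combinatorial support -/
def csupp (g : Fin m → List (Fin m)) (x : Fin m) : Set (Fin m) := {y | ∃ j, y ∈ itf g j x}

lemma self_mem_csupp (g : Fin m → List (Fin m)) (x : Fin m) : x ∈ csupp g x :=
  ⟨0, by rw [itf_zero]; exact List.mem_singleton_self x⟩

lemma csupp_trans {x y : Fin m} (hy : y ∈ csupp g x) : csupp g y ⊆ csupp g x := by
  rcases hy with ⟨j, hj⟩
  rintro b ⟨j', hj'⟩
  exact ⟨j' + j, itf_trans hj hj'⟩

lemma mem_csupp_of_mem_img {y u : Fin m} (hu : u ∈ g y) : u ∈ csupp g y :=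
  ⟨1, by rw [itf_one]; exact hu⟩

lemma mem_itf_mul_self {x : Fin m} {d : ℕ} (hx : x ∈ itf g d x) {c : ℕ} (hc : 1 ≤ c) :
    x ∈ itf g (d * c) x := by
  induction c with
  | zero => omega
  | succ c ih =>
    rcases Nat.eq_or_lt_of_le hc with hc1 | hc2
    · rw [← hc1, mul_one]; exact hx
    · have hcc : 1 ≤ c := by omega
      have : d * (c + 1) = d + d * c := by ring
      rw [this]
      exact itf_trans (ih hcc) hx

/-- the power system -/
def gpow (g : Fin m → List (Fin m)) (n : ℕ) : Fin m → List (Fin m) := fun x => itf g n x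

lemma subst_gpow (g : Fin m → List (Fin m)) (n : ℕ) (l : List (Fin m)) :
    subst (gpow g n) l = (subst g)^[n] l := (iterate_subst g n l).symm

lemma itf_gpow (g : Fin m → List (Fin m)) (n j : ℕ) (x : Fin m) :
    itf (gpow g n) j x = itf g (n * j) x := by
  induction j with
  | zero => rw [mul_zero]; rfl
  | succ j ih =>
    rw [itf_succ', ih, subst_gpow]
    have : n * (j + 1) = n + n * j := by ring
    rw [this, itf_add]

/-- reversed system -/
def rsys (g : Fin m → List (Fin m)) : Fin m → List (Fin m) := fun x => (g x).reverse

lemma subst_rsys (g : Fin m → List (Fin m)) (l : List (Fin m)) :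
    (subst g l).reverse = subst (rsys g) l.reverse := by
  induction l with
  | nil => rfl
  | cons a l ih =>
    rw [subst_cons, List.reverse_append, ih, List.reverse_cons, subst_append,
      subst_singleton]
    rfl

lemma itf_rsys (g : Fin m → List (Fin m)) (j : ℕ) (x : Fin m) :
    (itf g j x).reverse = itf (rsys g) j x := by
  induction j with
  | zero => rfl
  | succ j ih => rw [itf_succ', itf_succ', subst_rsys, ih]

lemma mem_rsys {y x : Fin m} : y ∈ rsys g x ↔ y ∈ g x := List.mem_reverse

lemma csupp_rsys (g : Fin m → List (Fin m)) (x : Fin m) : csupp (rsys g) x = csupp g x := by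
  ext y
  constructor <;> rintro ⟨j, hj⟩ <;> refine ⟨j, ?_⟩
  · rwa [← itf_rsys, List.mem_reverse] at hj
  · rw [← itf_rsys, List.mem_reverse]; exact hj

/-- counting in substitutions -/
lemma count_subst (a : Fin m) (l : List (Fin m)) :
    (subst g l).count a = (l.map (fun w => (g w).count a)).sum := by
  induction l with
  | nil => rfl
  | cons w l ih => rw [subst_cons, List.count_append, ih, List.map_cons, List.sum_cons]

lemma sum_ge_two_counts {x y : Fin m} (hxy : x ≠ y) (F : Fin m → ℕ) (l : List (Fin m)) :
    l.count x * F x + l.count y * F y ≤ (l.map F).sum := by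
  induction l with
  | nil => simp
  | cons w l ih =>
    rw [List.map_cons, List.sum_cons, List.count_cons, List.count_cons]
    by_cases hwx : w = x
    · subst hwx
      have h2 : ¬ (w == y) = true := by simpa using hxy
      simp only [beq_self_eq_true, if_true, h2, if_false, Bool.false_eq_true, add_zero]
      nlinarith [ih]
    · by_cases hwy : w = y
      · subst hwy
        have h1 : ¬ (w == x) = true := by simpa using fun h => hxy h.symm
        simp only [beq_self_eq_true, if_true, h1, if_false, Bool.false_eq_true, add_zero]
        nlinarith [ih]
      · have h1 : ¬ (w == x) = true := by simpa using hwx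
        have h2 : ¬ (w == y) = true := by simpa using hwy
        simp only [h1, h2, if_false, Bool.false_eq_true, add_zero]
        omega

end Combinatorics

/-- eventual periodicity of self-maps of `Fin m` -/
lemma iter_eventually_periodic (hm : 1 ≤ m) (θ : Fin m → Fin m) (x : Fin m) {n d : ℕ}
    (hn : m ≤ n) (hd : Nat.factorial m ∣ d) : θ^[n + d] x = θ^[n] x := by
  have hrep : ∃ i j : ℕ, i < j ∧ j ≤ m ∧ θ^[i] x = θ^[j] x := by
    obtain ⟨a, b, hab, heq⟩ := Fintype.exists_ne_map_eq_of_card_lt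
      (fun i : Fin (m + 1) => θ^[(i : ℕ)] x) (by simp)
    have hab' : (a : ℕ) ≠ (b : ℕ) := fun h => hab (Fin.ext h)
    rcases Nat.lt_or_ge (a : ℕ) (b : ℕ) with hlt | hge
    · exact ⟨a, b, hlt, Nat.lt_succ_iff.1 b.isLt, heq⟩
    · have hlt : (b : ℕ) < (a : ℕ) := by omega
      exact ⟨b, a, hlt, Nat.lt_succ_iff.1 a.isLt, heq.symm⟩
  obtain ⟨i, j, hij, hjm, heq⟩ := hrep
  set c := j - i with hc
  have hc1 : 1 ≤ c := by omega
  have hper : ∀ n' : ℕ, i ≤ n' → θ^[n' + c] x = θ^[n'] x := by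
    intro n' hn'
    induction n', hn' using Nat.le_induction with
    | base =>
      have : i + c = j := by omega
      rw [this, ← heq]
    | succ n'' hn'' ih =>
      have h1 : n'' + 1 + c = (n'' + c) + 1 := by omega
      rw [h1, Function.iterate_succ_apply', ih, Function.iterate_succ_apply']
  have hmult : ∀ t : ℕ, ∀ n' : ℕ, i ≤ n' → θ^[n' + c * t] x = θ^[n'] x := by
    intro t
    induction t with
    | zero => intro n' _; rw [mul_zero, add_zero]
    | succ t ih =>
      intro n' hn'
      have h1 : n' + c * (t + 1) = (n' + c * t) + c := by ring
      rw [h1, hper _ (by omega), ih n' hn']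
  have hcd : c ∣ d := dvd_trans (Nat.dvd_factorial (by omega) (by omega)) hd
  obtain ⟨t, rfl⟩ := hcd
  exact hmult t n (by omega)


section Find

variable {g : Fin m → List (Fin m)} {q q₁ : Fin m → Bool}

lemma find?_congr' {α : Type*} {p p' : α → Bool} (h : ∀ a, p a = p' a) (l : List α) :
    l.find? p = l.find? p' := by
  induction l with
  | nil => rfl
  | cons a l ih =>
    by_cases ha : p a = true
    · rw [List.find?_cons_of_pos ha, List.find?_cons_of_pos (by rw [← h]; exact ha)]
    · rw [List.find?_cons_of_neg ha, List.find?_cons_of_neg (by rw [← h]; exact ha), ih]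

/-- main block-scanning lemma for `find?` on substituted words -/
lemma find?_subst (hsome : ∀ w, q₁ w = true → ∃ u ∈ g w, q u = true)
    (hnone : ∀ w, q₁ w = false → ∀ u ∈ g w, q u = false) (l : List (Fin m)) :
    (subst g l).find? q = (l.find? q₁).bind (fun w => (g w).find? q) := by
  induction l with
  | nil => rfl
  | cons w l ih =>
    rw [subst_cons, List.find?_append]
    by_cases hq1 : q₁ w = true
    · rw [List.find?_cons_of_pos hq1, Option.bind_some]
      obtain ⟨u, hu, hqu⟩ := hsome w hq1
      have hsome2 : ((g w).find? q).isSome := List.find?_isSome.2 ⟨u, hu, hqu⟩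
      obtain ⟨v, hv⟩ := Option.isSome_iff_exists.1 hsome2
      rw [hv, Option.some_or]
    · rw [List.find?_cons_of_neg hq1, ih]
      have hq1' : q₁ w = false := Bool.eq_false_iff.2 hq1
      have : (g w).find? q = none := List.find?_eq_none.2 fun u hu h =>
        by rw [hnone w hq1' u hu] at h; exact Bool.false_ne_true h
      rw [this, Option.none_or]

/-- the total "first good letter" map -/
def fmap (g : Fin m → List (Fin m)) (q₁ : Fin m → Bool) : Fin m → Fin m :=
  fun w => ((g w).find? q₁).getD w

lemma fmap_spec (hsome : ∀ w, q₁ w = true → ∃ u ∈ g w, q₁ u = true) {w : Fin m}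
    (hw : q₁ w = true) :
    (g w).find? q₁ = some (fmap g q₁ w) ∧ q₁ (fmap g q₁ w) = true := by
  obtain ⟨u, hu, hqu⟩ := hsome w hw
  have hsome2 : ((g w).find? q₁).isSome := List.find?_isSome.2 ⟨u, hu, hqu⟩
  obtain ⟨v, hv⟩ := Option.isSome_iff_exists.1 hsome2
  have h1 : fmap g q₁ w = v := by rw [fmap, hv]; rfl
  rw [h1, hv]
  exact ⟨rfl, List.find?_some hv⟩

lemma fmap_iter_q₁ (hsome : ∀ w, q₁ w = true → ∃ u ∈ g w, q₁ u = true) {w : Fin m}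
    (hw : q₁ w = true) (j : ℕ) : q₁ ((fmap g q₁)^[j] w) = true := by
  induction j with
  | zero => exact hw
  | succ j ih =>
    rw [Function.iterate_succ_apply']
    exact (fmap_spec hsome ih).2

lemma find?_itf_q₁ (hsome : ∀ w, q₁ w = true → ∃ u ∈ g w, q₁ u = true)
    (hnone : ∀ w, q₁ w = false → ∀ u ∈ g w, q₁ u = false) {w : Fin m}
    (hw : q₁ w = true) (j : ℕ) :
    (itf g j w).find? q₁ = some ((fmap g q₁)^[j] w) := by
  induction j with
  | zero =>
    rw [itf_zero, Function.iterate_zero_apply]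
    exact List.find?_cons_of_pos hw
  | succ j ih =>
    rw [itf_succ', find?_subst hsome hnone, ih, Option.bind_some,
      Function.iterate_succ_apply']
    exact (fmap_spec hsome (fmap_iter_q₁ hsome hw j)).1

lemma find?_itf_q (hsome₁ : ∀ w, q₁ w = true → ∃ u ∈ g w, q₁ u = true)
    (hnone₁ : ∀ w, q₁ w = false → ∀ u ∈ g w, q₁ u = false)
    (hsome : ∀ w, q₁ w = true → ∃ u ∈ g w, q u = true)
    (hnone : ∀ w, q₁ w = false → ∀ u ∈ g w, q u = false) {w : Fin m}
    (hw : q₁ w = true) (j : ℕ) :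
    (itf g (j + 1) w).find? q = (g ((fmap g q₁)^[j] w)).find? q := by
  rw [itf_succ', find?_subst hsome hnone, find?_itf_q₁ hsome₁ hnone₁ hw, Option.bind_some]

/-- `head?` through substitution: special case of `find?` with the true predicate -/
lemma find?_true_eq_head? {α : Type*} (l : List α) :
    l.find? (fun _ => true) = l.head? := by
  cases l with
  | nil => rfl
  | cons a l => exact List.find?_cons_of_pos rfl

lemma head?_itf (hne : ∀ w, g w ≠ []) (j : ℕ) (x : Fin m) :
    (itf g j x).head? = some ((fmap g (fun _ => true))^[j] x) := by
  rw [← find?_true_eq_head?]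
  refine find?_itf_q₁ (fun w _ => ?_) (fun w hw => by simp at hw) rfl j
  obtain ⟨u, hu⟩ := List.exists_mem_of_ne_nil (g w) (hne w)
  exact ⟨u, hu, rfl⟩

end Find


lemma find?_eq_some_iff_isFirst {α : Type*} {P : α → Prop} [DecidablePred P]
    {l : List α} {a : α} :
    l.find? (fun b => decide (P b)) = some a ↔ IsFirstSuchThat P l a := by
  induction l with
  | nil =>
    simp only [List.find?_nil]
    constructor
    · intro h; exact absurd h (by simp)
    · rintro ⟨k, h, _⟩; exact absurd h (by simp)
  | cons w l ih =>
    by_cases hw : P w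
    · rw [List.find?_cons_of_pos (by simpa using hw)]
      constructor
      · rintro h
        have : w = a := by simpa using h
        subst this
        exact ⟨0, by simp, rfl, hw, fun k' h' hk' => absurd hk' (by omega)⟩
      · rintro ⟨k, h, hget, hPa, hmin⟩
        cases k with
        | zero => simp only [List.get] at hget; rw [hget]
        | succ k =>
          exact absurd hw (hmin 0 (by simp) (by omega))
    · rw [List.find?_cons_of_neg (by simpa using hw)]
      rw [ih]
      constructor
      · rintro ⟨k, h, hget, hPa, hmin⟩
        refine ⟨k + 1, by simpa using Nat.succ_lt_succ h, by simpa using hget, hPa, ?_⟩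
        intro k' h' hk'
        cases k' with
        | zero => simpa using hw
        | succ k' =>
          have h'' : k' < l.length := by simpa using Nat.lt_of_succ_lt_succ h'
          have := hmin k' h'' (by omega)
          simpa using this
      · rintro ⟨k, h, hget, hPa, hmin⟩
        cases k with
        | zero =>
          exfalso
          apply hw
          have hwa : w = a := hget
          rwa [hwa]
        | succ k =>
          have h'' : k < l.length := by simpa using Nat.lt_of_succ_lt_succ h
          refine ⟨k, h'', by simpa using hget, hPa, ?_⟩
          intro k' h' hk'
          have := hmin (k' + 1) (by simpa using Nat.succ_lt_succ h') (by omega)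
          simpa using this



lemma count_map_pair (l : List (Fin m)) (x : Fin m) :
    (l.map (fun a => (a, true))).count (x, true) = l.count x := by
  induction l with
  | nil => rfl
  | cons a l ih =>
    rw [List.map_cons, List.count_cons, List.count_cons, ih]
    congr 1
    by_cases hax : a = x
    · subst hax; simp
    · have h1 : ¬ ((a, true) == (x, true)) = true := by simp [hax]
      have h2 : ¬ (a == x) = true := by simpa using hax
      rw [if_neg h1, if_neg h2]

/-- growth of letter counts for exponential letters -/
lemma count_ge_three {hh : Fin m → List (Fin m)} (hA1 : ∀ a, a ∈ hh a) {x y : Fin m}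
    (hne : x ≠ y) (hyx : y ∈ hh x) (hxy : x ∈ hh y) :
    ∀ n, 3 ≤ n → 3 ≤ (itf hh n x).count x := by
  have hcx : 1 ≤ (hh x).count x := List.count_pos_iff.2 (hA1 x)
  have hcy : 1 ≤ (hh y).count y := List.count_pos_iff.2 (hA1 y)
  have hcyx : 1 ≤ (hh x).count y := List.count_pos_iff.2 hyx
  have hcxy : 1 ≤ (hh y).count x := List.count_pos_iff.2 hxy
  have step : ∀ n : ℕ,
      (itf hh n x).count x + (itf hh n x).count y ≤ (itf hh (n + 1) x).count x ∧
      (itf hh n x).count x + (itf hh n x).count y ≤ (itf hh (n + 1) x).count y := by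
    intro n
    constructor
    · rw [itf_succ', count_subst]
      have h1 := sum_ge_two_counts hne (fun w => (hh w).count x) (itf hh n x)
      have h2 : (itf hh n x).count x * 1 + (itf hh n x).count y * 1 ≤
          (itf hh n x).count x * (hh x).count x + (itf hh n x).count y * (hh y).count x :=
        Nat.add_le_add (Nat.mul_le_mul_left _ hcx) (Nat.mul_le_mul_left _ hcxy)
      omega
    · rw [itf_succ', count_subst]
      have h1 := sum_ge_two_counts hne (fun w => (hh w).count y) (itf hh n x)
      have h2 : (itf hh n x).count x * 1 + (itf hh n x).count y * 1 ≤
          (itf hh n x).count x * (hh x).count y + (itf hh n x).count y * (hh y).count y :=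
        Nat.add_le_add (Nat.mul_le_mul_left _ hcyx) (Nat.mul_le_mul_left _ hcy)
      omega
  have h1x : 1 ≤ (itf hh 1 x).count x := by rw [itf_one]; exact hcx
  have h1y : 1 ≤ (itf hh 1 x).count y := by rw [itf_one]; exact hcyx
  obtain ⟨h2a, h2b⟩ := step 1
  obtain ⟨h3a, h3b⟩ := step 2
  norm_num at h2a h2b h3a h3b
  have hbase : 3 ≤ (itf hh 3 x).count x := by omega
  intro n hn
  induction n, hn using Nat.le_induction with
  | base => exact hbase
  | succ n hn ih =>
    obtain ⟨ha, hb⟩ := step n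
    omega


end Cond

open Cond

theorem conditioning_proposition (m : ℕ) (φ : MulAut (FreeGroup (Fin m)))
    (hpos : IsPositiveAut m φ) :
    ∃ k : ℕ, 1 ≤ k ∧ Conditioned m (φ ^ k) := by
  classical
  rcases Nat.eq_zero_or_pos m with hm0 | hm
  · subst hm0
    exact ⟨1, le_rfl, fun x => x.elim0, fun x => x.elim0, fun x => x.elim0,
      fun x => x.elim0, fun x => x.elim0⟩
  set f := sys φ with hf
  have hw : ∀ i, φ (FreeGroup.of i) = pw (f i) := by
    intro i
    conv_lhs => rw [← FreeGroup.mk_toWord (x := φ (FreeGroup.of i))]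
    rw [word_eq hpos i]
    rfl
  have hrec := recurrence φ f hw
  choose jx hjx using hrec
  set K := ∏ x : Fin m, (jx x + 1) with hK
  have hK1 : 1 ≤ K := Finset.one_le_prod' (fun i _ => by omega)
  have hKrec : ∀ x, x ∈ itf f K x := by
    intro x
    obtain ⟨c, hc⟩ := Finset.dvd_prod_of_mem (fun x => jx x + 1) (Finset.mem_univ x)
    have hc1 : 1 ≤ c := by
      rcases Nat.eq_zero_or_pos c with h0 | h1
      · rw [h0, mul_zero] at hc; omega
      · exact h1
    rw [hK, hc]
    exact mem_itf_mul_self (hjx x) hc1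
  set g := gpow f K with hg
  have hg1 : ∀ a, a ∈ g a := hKrec
  -- choose N3 making supports appear in one step
  set jf : Fin m × Fin m → ℕ :=
    fun p => if h : p.2 ∈ csupp g p.1 then Classical.choose h else 0 with hjf
  set N3 := (Finset.univ.sup jf) + 1 with hN3def
  have hN31 : 1 ≤ N3 := by omega
  have hN3 : ∀ x y, y ∈ csupp g x → y ∈ itf g N3 x := by
    intro x y hxy
    have h1 : y ∈ itf g (jf (x, y)) x := by
      have : jf (x, y) = Classical.choose hxy := by rw [hjf]; exact dif_pos hxy
      rw [this]
      exact Classical.choose_spec hxy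
    exact mem_itf_mono hg1
      (le_trans (Finset.le_sup (Finset.mem_univ (x, y))) (by omega)) h1
  set hh := gpow g N3 with hhh
  have hh1 : ∀ a, a ∈ hh a := fun a =>
    mem_itf_mono hg1 hN31 (by rw [itf_one]; exact hg1 a)
  have hhsub : ∀ x, csupp hh x ⊆ csupp g x := by
    rintro x y ⟨j, hj⟩
    rw [hhh, itf_gpow] at hj
    exact ⟨N3 * j, hj⟩
  have hh3 : ∀ x y, y ∈ csupp hh x → y ∈ hh x := fun x y hy => hN3 x y (hhsub x hy)
  have hhne : ∀ a, hh a ≠ [] := fun a => List.ne_nil_of_mem (hh1 a)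
  set N := 3 * Nat.factorial (m + 1) with hNdef
  have hdvdN : Nat.factorial m ∣ N :=
    ⟨3 * (m + 1), by rw [hNdef, Nat.factorial_succ]; ring⟩
  have hNm : m + 1 ≤ N :=
    le_trans (Nat.self_le_factorial (m + 1)) (by rw [hNdef]; omega)
  have hN3big : 3 ≤ N := by
    have := Nat.factorial_pos (m + 1)
    rw [hNdef]; omega
  have hN1 : 1 ≤ N := by omega
  set k := (K * N3) * N with hk
  have hk1 : 1 ≤ k := by
    rw [hk]
    exact Nat.one_le_iff_ne_zero.2 (by positivity)
  -- word translation
  have hitf : ∀ j x, itf hh j x = itf f ((K * N3) * j) x := by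
    intro j x
    rw [hhh, itf_gpow, hg, itf_gpow, mul_assoc]
  have hword : ∀ j x, (((φ ^ k) ^ j) (FreeGroup.of x)).toWord =
      (itf hh (N * j) x).map (fun a => (a, true)) := by
    intro j x
    rw [← pow_mul, bridge_toWord hpos, hitf]
    congr 2
    rw [hk]; ring
  have hword1 : ∀ x, ((φ ^ k) (FreeGroup.of x)).toWord =
      (itf hh N x).map (fun a => (a, true)) := by
    intro x
    have := hword 1 x
    rwa [pow_one, mul_one] at this
  have happ : ∀ j y x, Appears m (φ ^ k) j y x ↔ y ∈ itf hh (N * j) x := by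
    intro j y x
    rw [Appears, hword j x, List.mem_map]
    constructor
    · rintro ⟨a, ha, haa⟩
      have : a = y := by simpa using congrArg Prod.fst haa
      rwa [this] at ha
    · intro hy
      exact ⟨y, hy, rfl⟩
  have hsupp : ∀ x, supp m (φ ^ k) x = csupp hh x := by
    intro x
    ext y
    constructor
    · rintro ⟨j, hj⟩
      exact ⟨N * j, (happ j y x).1 hj⟩
    · rintro ⟨j, hj⟩
      exact ⟨j, (happ j y x).2
        (mem_itf_mono hh1 (Nat.le_mul_of_pos_left j hN1) hj)⟩
  have hstr : ∀ z u, u ∈ stratum m (φ ^ k) z ↔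
      u ∈ csupp hh z ∧ csupp hh u = csupp hh z := by
    intro z u
    simp only [stratum, Set.mem_sep_iff, hsupp]
  refine ⟨k, hk1, ?_, ?_, ?_, ?_, ?_⟩
  · -- (1)
    intro x
    rw [happ 1 x x, mul_one]
    exact mem_itf_mono hh1 hN1 (by rw [itf_one]; exact hh1 x)
  · -- (2)
    rintro x ⟨y, hy, hyne⟩
    rw [hstr] at hy
    have hyx : y ∈ hh x := hh3 x y hy.1
    have hxy : x ∈ hh y := hh3 y x (by rw [hy.2]; exact self_mem_csupp hh x)
    have hcount := count_ge_three hh1 (Ne.symm hyne) hyx hxy N hN3big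
    rw [hword1 x]
    rw [count_map_pair]
    exact hcount
  · -- (3)
    intro x y hy
    rw [hsupp] at hy
    rw [happ 1 y x, mul_one]
    exact mem_itf_mono hh1 hN1 (by rw [itf_one]; exact hh3 x y hy)
  · -- (4)
    intro x j hj
    obtain ⟨j', rfl⟩ : ∃ j', j = j' + 1 := ⟨j - 1, by omega⟩
    have harith : N * (j' + 1) = N + N * j' := by ring
    constructor
    · rw [hword _ x, hword1 x, List.head?_map, List.head?_map,
        head?_itf hhne, head?_itf hhne, harith,
        iter_eventually_periodic hm _ x (by omega) (Dvd.dvd.mul_right hdvdN j')]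
    · have hrne : ∀ a, rsys hh a ≠ [] := by
        intro a h0
        exact hhne a (by simpa [rsys, List.reverse_eq_nil_iff] using h0)
      rw [hword _ x, hword1 x, ← List.head?_reverse, ← List.head?_reverse,
        ← List.map_reverse, ← List.map_reverse, itf_rsys, itf_rsys,
        List.head?_map, List.head?_map, head?_itf hrne, head?_itf hrne, harith,
        iter_eventually_periodic hm _ x (by omega) (Dvd.dvd.mul_right hdvdN j')]
  · -- (5)
    intro x j hj z hz
    rw [hsupp] at hz
    set P : Fin m × Bool → Prop := fun q => q.1 ∈ stratum m (φ ^ k) z with hP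
    set q : Fin m → Bool := fun u => decide (P (u, true)) with hq
    set q₁ : Fin m → Bool := fun w => decide (z ∈ csupp hh w) with hq₁
    have hq₁x : q₁ x = true := by rw [hq₁]; exact decide_eq_true hz
    have hq₁mem : ∀ w, q₁ w = true ↔ z ∈ csupp hh w := by
      intro w; simp only [hq₁, decide_eq_true_eq]
    have hqmem : ∀ u, q u = true ↔ (u ∈ csupp hh z ∧ csupp hh u = csupp hh z) := by
      intro u; simp only [hq, decide_eq_true_eq, hP]; exact hstr z u
    have hqz : q z = true := (hqmem z).2 ⟨self_mem_csupp hh z, rfl⟩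
    -- the uniform claim for a system with the right properties
    have main5 : ∀ g' : Fin m → List (Fin m), (∀ a, a ∈ g' a) →
        (∀ w, z ∈ csupp hh w → z ∈ g' w) →
        (∀ w u, u ∈ g' w → csupp hh u ⊆ csupp hh w) →
        ∃ p₀ : Fin m, ∀ j'' : ℕ, 1 ≤ j'' → (itf g' (N * j'') x).find? q = some p₀ := by
      intro g' hA1' hmemz htrans
      have hs₁ : ∀ w, q₁ w = true → ∃ u ∈ g' w, q₁ u = true := fun w hw =>
        ⟨z, hmemz w ((hq₁mem w).1 hw), (hq₁mem z).2 (self_mem_csupp hh z)⟩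
      have hn₁ : ∀ w, q₁ w = false → ∀ u ∈ g' w, q₁ u = false := by
        intro w hw u hu
        have hwneg : ¬ z ∈ csupp hh w := by
          intro hzw
          rw [(hq₁mem w).2 hzw] at hw
          simp at hw
        rw [hq₁]
        exact decide_eq_false (fun hzu => hwneg (htrans w u hu hzu))
      have hsq : ∀ w, q₁ w = true → ∃ u ∈ g' w, q u = true := fun w hw =>
        ⟨z, hmemz w ((hq₁mem w).1 hw), hqz⟩
      have hnq : ∀ w, q₁ w = false → ∀ u ∈ g' w, q u = false := by
        intro w hw u hu
        have hwneg : ¬ z ∈ csupp hh w := by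
          intro hzw
          rw [(hq₁mem w).2 hzw] at hw
          simp at hw
        rw [hq]
        refine decide_eq_false (fun hPu => ?_)
        have h2 := (hqmem u).1 (by rw [hq]; exact decide_eq_true hPu)
        have hzu : z ∈ csupp hh u := by rw [h2.2]; exact self_mem_csupp hh z
        exact hwneg (htrans w u hu hzu)
      have key : ∀ j'' : ℕ, 1 ≤ j'' → (itf g' (N * j'') x).find? q =
          (g' ((fmap g' q₁)^[N - 1] x)).find? q := by
        intro j'' hj''
        obtain ⟨j0, rfl⟩ : ∃ j0, j'' = j0 + 1 := ⟨j'' - 1, by omega⟩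
        have e1 : N * (j0 + 1) = N * j0 + N := by ring
        have e2 : N * j0 + N = (N - 1 + N * j0) + 1 := by omega
        rw [e1, e2, find?_itf_q hs₁ hn₁ hsq hnq hq₁x (N - 1 + N * j0)]
        congr 2
        exact iter_eventually_periodic hm _ x (by omega) (Dvd.dvd.mul_right hdvdN j0)
      have hex : ∃ u ∈ itf g' N x, q u = true :=
        ⟨z, mem_itf_mono hA1' hN1 (by rw [itf_one]; exact hmemz x hz), hqz⟩
      obtain ⟨p₀, hp₀⟩ := Option.isSome_iff_exists.1 (List.find?_isSome.2 hex)
      refine ⟨p₀, fun j'' hj'' => ?_⟩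
      have hone := key 1 le_rfl
      rw [mul_one] at hone
      rw [key j'' hj'', ← hone]
      exact hp₀
    have hcomp : ((fun b => decide (P b)) ∘ (fun a : Fin m => (a, true))) = q := rfl
    constructor
    · obtain ⟨p₀, hp⟩ := main5 hh hh1 (fun w hw => hh3 w z hw)
        (fun w u hu => csupp_trans (mem_csupp_of_mem_img hu))
      refine ⟨(p₀, true), ?_, ?_⟩
      · rw [← find?_eq_some_iff_isFirst (P := P)]
        rw [hword j x, List.find?_map, hcomp, hp j hj]
        rfl
      · rw [← find?_eq_some_iff_isFirst (P := P)]
        have hp1 := hp 1 le_rfl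
        rw [mul_one] at hp1
        rw [hword1 x, List.find?_map, hcomp, hp1]
        rfl
    · obtain ⟨p₀, hp⟩ := main5 (rsys hh) (fun a => mem_rsys.2 (hh1 a))
        (fun w hw => mem_rsys.2 (hh3 w z hw))
        (fun w u hu => csupp_trans (mem_csupp_of_mem_img (mem_rsys.1 hu)))
      refine ⟨(p₀, true), ?_, ?_⟩
      · show IsFirstSuchThat P (((φ ^ k) ^ j) (FreeGroup.of x)).toWord.reverse (p₀, true)
        rw [← find?_eq_some_iff_isFirst (P := P)]
        rw [hword j x, ← List.map_reverse, itf_rsys, List.find?_map, hcomp, hp j hj]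
        rfl
      · show IsFirstSuchThat P ((φ ^ k) (FreeGroup.of x)).toWord.reverse (p₀, true)
        rw [← find?_eq_some_iff_isFirst (P := P)]
        have hp1 := hp 1 le_rfl
        rw [mul_one] at hp1
        rw [hword1 x, ← List.map_reverse, itf_rsys, List.find?_map, hcomp, hp1]
        rfl
end

section
/- Left-order property for positive automorphisms: Let φ be a positive automorphism of the free group F with basis a_1, …, a_m, and suppose that for every basis letter x, if the positive word φ^j(x) begins with the letter x for some j ≥ 1, then φ(x) begins with x. Then for any basis letters x_1, …, x_r (with x_{r+1} := x_1) and any positive integers j_1, …, j_r such that φ^{j_k}(x_k) begins with x_{k+1} for each k = 1, …, r, one has x_1 = x_2 = ⋯ = x_r. Consequently, the relation defined on basis letters by 'y ⪯_L x if and only if y = x or φ^j(x) begins with y for some j ≥ 1' is a partial order. -/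
/-- The (positive) word `w` begins with the basis letter `y`. -/
def BeginsWith (m : ℕ) (w : FreeGroup (Fin m)) (y : Fin m) : Prop :=
  ∃ b : Bool, w.toWord.head? = some (y, b)

section Aux

variable {m : ℕ}

/-- A word all of whose letters are positive. -/
def PosElt (w : FreeGroup (Fin m)) : Prop := ∀ p ∈ w.toWord, p.2 = true

lemma reduce_pos (L : List (Fin m × Bool)) (hL : ∀ p ∈ L, p.2 = true) :
    FreeGroup.reduce L = L := by
  induction L with
  | nil => rfl
  | cons a L ih =>
    have ha : a.2 = true := hL a (List.mem_cons_self)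
    have ih' := ih (fun p hp => hL p (List.mem_cons_of_mem a hp))
    rw [FreeGroup.reduce.cons, ih']
    cases L with
    | nil => rfl
    | cons b L' =>
      have hb : b.2 = true := hL b (List.mem_cons_of_mem a (List.mem_cons_self))
      simp [ha, hb]

lemma toWord_mul_pos {u v : FreeGroup (Fin m)} (hu : PosElt u) (hv : PosElt v) :
    (u * v).toWord = u.toWord ++ v.toWord := by
  conv_lhs => rw [← FreeGroup.mk_toWord (x := u), ← FreeGroup.mk_toWord (x := v)]
  rw [FreeGroup.mul_mk, FreeGroup.toWord_mk]
  apply reduce_pos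
  intro p hp
  rcases List.mem_append.1 hp with h | h
  · exact hu p h
  · exact hv p h

lemma posElt_mul {u v : FreeGroup (Fin m)} (hu : PosElt u) (hv : PosElt v) :
    PosElt (u * v) := by
  intro p hp
  rw [toWord_mul_pos hu hv] at hp
  rcases List.mem_append.1 hp with h | h
  · exact hu p h
  · exact hv p h

variable {φ : MulAut (FreeGroup (Fin m))} (hpos : IsPositiveAut m φ)

include hpos in
lemma posElt_apply {w : FreeGroup (Fin m)} (hw : PosElt w) : PosElt (φ w) := by
  have key : ∀ L : List (Fin m × Bool), (∀ p ∈ L, p.2 = true) →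
      PosElt (φ (FreeGroup.mk L)) := by
    intro L
    induction L with
    | nil =>
      intro _
      have : FreeGroup.mk ([] : List (Fin m × Bool)) = 1 := rfl
      rw [this, map_one]
      intro p hp
      simp [FreeGroup.toWord_one] at hp
    | cons a L ih =>
      intro hL
      have ha : a.2 = true := hL a (List.mem_cons_self)
      have : FreeGroup.mk (a :: L) = FreeGroup.of a.1 * FreeGroup.mk L := by
        rw [show FreeGroup.of a.1 = FreeGroup.mk [(a.1, true)] from rfl, FreeGroup.mul_mk]
        have haa : a = (a.1, true) := Prod.ext rfl ha
        rw [haa]; rfl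
      rw [this, map_mul]
      exact posElt_mul (hpos a.1) (ih (fun p hp => hL p (List.mem_cons_of_mem a hp)))
  have := key w.toWord hw
  rwa [FreeGroup.mk_toWord] at this

lemma of_toWord_ne_nil (x : Fin m) : (φ (FreeGroup.of x)).toWord ≠ [] := by
  intro hc
  rw [FreeGroup.toWord_eq_nil_iff] at hc
  have : FreeGroup.of x = (1 : FreeGroup (Fin m)) := by
    have := congrArg φ.symm hc
    simpa using this
  exact FreeGroup.of_ne_one x this

/-- The first letter of `φ (of x)`. -/
noncomputable def firstLetter (φ : MulAut (FreeGroup (Fin m))) (x : Fin m) : Fin m :=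
  ((φ (FreeGroup.of x)).toWord.head (of_toWord_ne_nil x)).1

include hpos in
lemma head?_apply_of (x : Fin m) :
    (φ (FreeGroup.of x)).toWord.head? = some (firstLetter φ x, true) := by
  have hne := of_toWord_ne_nil (φ := φ) x
  have h1 : (φ (FreeGroup.of x)).toWord.head? =
      some ((φ (FreeGroup.of x)).toWord.head hne) := List.head?_eq_head hne
  have h2 : ((φ (FreeGroup.of x)).toWord.head hne).2 = true :=
    hpos x _ (List.head_mem hne)
  rw [h1]
  congr 1
  exact Prod.ext rfl h2

include hpos in
lemma head?_apply {w : FreeGroup (Fin m)} (hw : PosElt w) {y : Fin m}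
    (hy : w.toWord.head? = some (y, true)) :
    (φ w).toWord.head? = some (firstLetter φ y, true) := by
  obtain ⟨L, hL⟩ : ∃ L, w.toWord = (y, true) :: L := by
    cases hE : w.toWord with
    | nil => rw [hE] at hy; simp at hy
    | cons a L =>
      rw [hE] at hy
      simp at hy
      exact ⟨L, by rw [← hy]⟩
  have hwdecomp : w = FreeGroup.of y * FreeGroup.mk L := by
    conv_lhs => rw [← FreeGroup.mk_toWord (x := w)]
    rw [hL, show FreeGroup.of y = FreeGroup.mk [(y, true)] from rfl, FreeGroup.mul_mk]
    rfl
  have hLpos : ∀ p ∈ L, p.2 = true := by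
    intro p hp
    exact hw p (by rw [hL]; exact List.mem_cons_of_mem _ hp)
  have hmkpos : PosElt (FreeGroup.mk L) := by
    intro p hp
    rw [FreeGroup.toWord_mk, reduce_pos L hLpos] at hp
    exact hLpos p hp
  rw [hwdecomp, map_mul,
    toWord_mul_pos (posElt_apply hpos (fun p hp => by
      rw [FreeGroup.toWord_of] at hp; simp at hp; rw [hp])) (posElt_apply hpos hmkpos)]
  rw [List.head?_append_of_ne_nil _ (of_toWord_ne_nil y)]
  exact head?_apply_of hpos y

include hpos in
lemma posElt_pow (x : Fin m) (j : ℕ) : PosElt ((φ ^ j) (FreeGroup.of x)) := by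
  induction j with
  | zero =>
    intro p hp
    simp only [pow_zero] at hp
    have : ((1 : MulAut (FreeGroup (Fin m))) (FreeGroup.of x)).toWord = [(x, true)] := by
      rw [MulAut.one_apply, FreeGroup.toWord_of]
    rw [this] at hp
    simp at hp
    rw [hp]
  | succ j ih =>
    have hpow : (φ ^ (j + 1)) (FreeGroup.of x) = φ ((φ ^ j) (FreeGroup.of x)) := by
      rw [pow_succ']; rfl
    rw [hpow]
    exact posElt_apply hpos ih

include hpos in
lemma head?_pow (x : Fin m) (j : ℕ) :
    ((φ ^ j) (FreeGroup.of x)).toWord.head? = some ((firstLetter φ)^[j] x, true) := by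
  induction j with
  | zero =>
    have : ((φ ^ 0) (FreeGroup.of x)) = FreeGroup.of x := by rw [pow_zero]; rfl
    rw [this, FreeGroup.toWord_of]
    rfl
  | succ j ih =>
    have hpow : (φ ^ (j + 1)) (FreeGroup.of x) = φ ((φ ^ j) (FreeGroup.of x)) := by
      rw [pow_succ']; rfl
    rw [hpow, head?_apply hpos (posElt_pow hpos x j) ih,
      Function.iterate_succ_apply']

include hpos in
lemma beginsWith_iff (x y : Fin m) (j : ℕ) :
    BeginsWith m ((φ ^ j) (FreeGroup.of x)) y ↔ (firstLetter φ)^[j] x = y := by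
  constructor
  · rintro ⟨b, hb⟩
    rw [head?_pow hpos x j] at hb
    exact congrArg Prod.fst (Option.some.inj hb)
  · rintro rfl
    exact ⟨true, head?_pow hpos x j⟩

end Aux

theorem left_order_property (m : ℕ) (φ : MulAut (FreeGroup (Fin m)))
    (hpos : IsPositiveAut m φ)
    (h : ∀ x : Fin m, ∀ j : ℕ, 1 ≤ j →
      BeginsWith m ((φ ^ j) (FreeGroup.of x)) x → BeginsWith m (φ (FreeGroup.of x)) x) :
    -- any cycle `φ^{j_k}(x_k)` begins with `x_{k+1}` (indices mod `r`) collapses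
    (∀ r : ℕ, 0 < r → ∀ (x : ℕ → Fin m) (j : ℕ → ℕ),
      (∀ k < r, 1 ≤ j k) →
      (∀ k < r, BeginsWith m ((φ ^ j k) (FreeGroup.of (x k))) (x ((k + 1) % r))) →
      ∀ k₁ < r, ∀ k₂ < r, x k₁ = x k₂) ∧
    -- consequently `⪯_L` is a partial order
    IsPartialOrder (Fin m)
      (fun y x => y = x ∨ ∃ j : ℕ, 1 ≤ j ∧ BeginsWith m ((φ ^ j) (FreeGroup.of x)) y) := by
  set f := firstLetter φ with hf
  -- translate hypothesis `h` to a statement about `f`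
  have hφ1 : φ = φ ^ 1 := (pow_one φ).symm
  have hfix : ∀ x : Fin m, ∀ j : ℕ, 1 ≤ j → f^[j] x = x → f x = x := by
    intro x j hj hxj
    have := h x j hj ((beginsWith_iff hpos x x j).2 hxj)
    rw [hφ1] at this
    have := (beginsWith_iff hpos x x 1).1 this
    simpa using this
  constructor
  · intro r hr x j hj hcyc
    -- restate cycle condition via `f`
    have hcyc' : ∀ k < r, f^[j k] (x k) = x ((k + 1) % r) := fun k hk =>
      (beginsWith_iff hpos _ _ _).1 (hcyc k hk)
    -- prove every `x k` (`k < r`) equals `x 0`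
    have key : ∀ k ≤ r, f^[∑ i ∈ Finset.range k, j i] (x 0) = x (k % r) := by
      intro k hk
      induction k with
      | zero => simp
      | succ k ih =>
        have hk' : k < r := hk
        have ihk := ih (Nat.le_of_lt hk')
        rw [Nat.mod_eq_of_lt hk'] at ihk
        rw [Finset.sum_range_succ, Nat.add_comm, Function.iterate_add_apply, ihk]
        exact hcyc' k hk'
      
    have hJ : f^[∑ i ∈ Finset.range r, j i] (x 0) = x 0 := by
      have := key r le_rfl
      rwa [Nat.mod_self] at this
    have hJpos : 1 ≤ ∑ i ∈ Finset.range r, j i := by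
      calc 1 ≤ j 0 := hj 0 hr
        _ ≤ _ := Finset.single_le_sum (f := j) (fun i _ => Nat.zero_le _)
            (Finset.mem_range.2 hr)
    have hfx0 : f (x 0) = x 0 := hfix (x 0) _ hJpos hJ
    have hall : ∀ k < r, x k = x 0 := by
      intro k hk
      have := key k (Nat.le_of_lt hk)
      rw [Nat.mod_eq_of_lt hk] at this
      rw [← this, Function.iterate_fixed hfx0]
    intro k₁ hk₁ k₂ hk₂
    rw [hall k₁ hk₁, hall k₂ hk₂]
  · refine { refl := ?_, trans := ?_, antisymm := ?_ }
    case refine_1 => intro x; exact Or.inl rfl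
    case refine_2 =>
      intro z y x hzy hyx
      rcases hzy with rfl | ⟨j₁, hj₁, hb₁⟩
      · exact hyx
      · rcases hyx with rfl | ⟨j₂, hj₂, hb₂⟩
        · exact Or.inr ⟨j₁, hj₁, hb₁⟩
        · refine Or.inr ⟨j₁ + j₂, le_trans hj₁ (Nat.le_add_right _ _), ?_⟩
          rw [beginsWith_iff hpos] at hb₁ hb₂ ⊢
          rw [Function.iterate_add_apply, hb₂, hb₁]
    case refine_3 =>
      intro y x hyx hxy
      rcases hyx with rfl | ⟨j₁, hj₁, hb₁⟩
      · rfl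
      · rcases hxy with heq | ⟨j₂, hj₂, hb₂⟩
        · exact heq.symm
        · rw [beginsWith_iff hpos] at hb₁ hb₂
          have : f^[j₂ + j₁] x = x := by
            rw [Function.iterate_add_apply, hb₁, hb₂]
          have hfx : f x = x := hfix x _ (le_trans hj₂ (Nat.le_add_right _ _)) this
          rw [← hb₁, Function.iterate_fixed hfx]
end
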